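/- arXiv:1212.5738 — 2 statements merged into one kernel-verified Lean document; each statement's English description precedes it below -/
import Mathlib

section
/- Let p be a prime, n ≥ 1, and let A ⊆ (ZMod p)^n be 𝓔-compressed. Then A is a down-set in the coordinatewise partial order: if a ∈ A and b ∈ (ZMod p)^n satisfies b_j ≤ a_j (as integers in {0, …, p−1}) for every coordinate j, then b ∈ A. -/
open Pointwise

/-- `u ≺ v` in the lexicographic order: `u i < v i` (as values in `{0,…,p-1}`)
at the largest coordinate `i` where `u` and `v` differ. -/
def lexLt {n p : ℕ} (u v : Fin n → ZMod p) : Prop :=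
  ∃ i : Fin n, (u i).val < (v i).val ∧ ∀ j : Fin n, i < j → u j = v j

/-- The `v`-line through `u`: `L_v^u = {u + k•v : k ∈ ZMod p}`. -/
def line {n p : ℕ} (v u : Fin n → ZMod p) : Set (Fin n → ZMod p) :=
  {x | ∃ k : ZMod p, x = u + k • v}

/-- `IS k L`: the set of the `k` lexicographically smallest elements of `L`. -/
def IS {n p : ℕ} (k : ℕ) (L : Set (Fin n → ZMod p)) : Set (Fin n → ZMod p) :=
  {x | x ∈ L ∧ ({y | y ∈ L ∧ lexLt y x}).ncard < k}

/-- The `v`-compression of `A`: on each `v`-line `L`, replace `A ∩ L` by the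
initial segment of `L` of the same cardinality. -/
def comp {n p : ℕ} (v : Fin n → ZMod p) (A : Set (Fin n → ZMod p)) :
    Set (Fin n → ZMod p) :=
  ⋃ u : Fin n → ZMod p, IS (A ∩ line v u).ncard (line v u)

/-- `E = {0, e₁, …, e_n}`: zero together with the standard basis. -/
def stdE (n p : ℕ) : Set (Fin n → ZMod p) :=
  {0} ∪ Set.range (fun i : Fin n => Pi.single i (1 : ZMod p))

/-- `A` is `𝓔`-compressed: `E ⊆ A` and `A` is `v`-compressed for every nonzero `v`
whose compression keeps `E` inside the set. -/
def ECompressed {n p : ℕ} (A : Set (Fin n → ZMod p)) : Prop :=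
  stdE n p ⊆ A ∧
    ∀ v : Fin n → ZMod p, v ≠ 0 → stdE n p ⊆ comp v A → comp v A = A

set_option linter.unusedSectionVars false
section aux
variable {n p : ℕ} [NeZero p]

lemma mem_line_single {j : Fin n} {u x : Fin n → ZMod p} :
    x ∈ line (Pi.single j 1) u ↔ ∀ i, i ≠ j → x i = u i := by
  constructor
  · rintro ⟨k, rfl⟩ i hi
    simp [Pi.single_apply, hi]
  · intro h
    refine ⟨x j - u j, ?_⟩
    funext i
    by_cases hi : i = j
    · subst hi; simp
    · simp [h i hi, Pi.single_apply, hi]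

lemma lexLt_line {j : Fin n} {u x y : Fin n → ZMod p}
    (hx : ∀ i, i ≠ j → x i = u i) (hy : ∀ i, i ≠ j → y i = u i) :
    lexLt y x ↔ (y j).val < (x j).val := by
  constructor
  · rintro ⟨i, h1, h2⟩
    rcases eq_or_ne i j with rfl | hij
    · exact h1
    · exact absurd h1 (by rw [hy i hij, hx i hij]; exact lt_irrefl _)
  · intro h
    exact ⟨j, h, fun k hk => by rw [hy k hk.ne', hx k hk.ne']⟩

lemma ncard_val_lt {t : ℕ} (ht : t ≤ p) : {c : ZMod p | c.val < t}.ncard = t := by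
  have h : ZMod.val '' {c : ZMod p | c.val < t} = Set.Iio t := by
    ext m
    simp only [Set.mem_image, Set.mem_setOf_eq, Set.mem_Iio]
    constructor
    · rintro ⟨c, hc, rfl⟩; exact hc
    · intro hm
      exact ⟨(m : ZMod p), by rw [ZMod.val_natCast_of_lt (lt_of_lt_of_le hm ht)]; exact hm,
        ZMod.val_natCast_of_lt (lt_of_lt_of_le hm ht)⟩
  rw [← Set.ncard_image_of_injective _ (ZMod.val_injective p), h]
  rw [show (Set.Iio t : Set ℕ) = ↑(Finset.range t) by ext x; simp]
  rw [Set.ncard_coe_finset, Finset.card_range]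

lemma card_below {j : Fin n} (a : Fin n → ZMod p) :
    {y | y ∈ line (Pi.single j 1) a ∧ lexLt y a}.ncard = (a j).val := by
  have heq : {y | y ∈ line (Pi.single j 1) a ∧ lexLt y a}
      = (fun c : ZMod p => Function.update a j c) '' {c : ZMod p | c.val < (a j).val} := by
    ext y
    simp only [Set.mem_setOf_eq, Set.mem_image, mem_line_single]
    constructor
    · rintro ⟨hy, hlt⟩
      refine ⟨y j, (lexLt_line (fun i _ => rfl) hy).mp hlt, ?_⟩
      funext i
      rcases eq_or_ne i j with rfl | hi
      · simp
      · rw [Function.update_apply, if_neg hi, hy i hi]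
    · rintro ⟨c, hc, rfl⟩
      have hmem : ∀ i, i ≠ j → Function.update a j c i = a i := fun i hi => by
        rw [Function.update_apply, if_neg hi]
      refine ⟨hmem, (lexLt_line (fun i _ => rfl) hmem).mpr ?_⟩
      simpa using hc
  rw [heq, Set.ncard_image_of_injective _ (fun c d h => by simpa using congrFun h j),
    ncard_val_lt (ZMod.val_lt (a j)).le]

lemma line_self {j : Fin n} (a : Fin n → ZMod p) : a ∈ line (Pi.single j 1) a :=
  mem_line_single.mpr (fun _ _ => rfl)

lemma line_eq {j : Fin n} {u x : Fin n → ZMod p} (hx : x ∈ line (Pi.single j 1) u) :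
    line (Pi.single j 1) u = line (Pi.single j 1) x := by
  rw [mem_line_single] at hx
  ext y
  rw [mem_line_single, mem_line_single]
  exact ⟨fun h i hi => (h i hi).trans (hx i hi).symm,
    fun h i hi => (h i hi).trans (hx i hi)⟩

lemma mem_comp_of {A : Set (Fin n → ZMod p)} {j : Fin n} {x : Fin n → ZMod p}
    (hx : (x j).val < (A ∩ line (Pi.single j 1) x).ncard) :
    x ∈ comp (Pi.single j 1) A := by
  refine Set.mem_iUnion.mpr ⟨x, line_self x, ?_⟩
  rwa [card_below]

lemma update_mem {A : Set (Fin n → ZMod p)} {j : Fin n}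
    (hcomp : comp (Pi.single j 1) A = A) {a : Fin n → ZMod p} (ha : a ∈ A)
    {c : ZMod p} (hc : c.val ≤ (a j).val) :
    Function.update a j c ∈ A := by
  rw [← hcomp] at ha ⊢
  obtain ⟨u, hu, hlt⟩ := Set.mem_iUnion.mp ha
  rw [line_eq hu, card_below] at hlt
  have hupd : Function.update a j c ∈ line (Pi.single j 1) a :=
    mem_line_single.mpr (fun i hi => by rw [Function.update_apply, if_neg hi])
  refine Set.mem_iUnion.mpr ⟨a, hupd, ?_⟩
  rw [line_eq hupd, card_below, ← line_eq hupd]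
  simpa using lt_of_le_of_lt hc hlt

end aux

theorem statement9 (p n : ℕ) (hp : p.Prime) (hn : 1 ≤ n)
    (A : Set (Fin n → ZMod p)) (hA : ECompressed A)
    (a b : Fin n → ZMod p) (ha : a ∈ A)
    (hba : ∀ j : Fin n, (b j).val ≤ (a j).val) :
    b ∈ A := by

  haveI : Fact p.Prime := ⟨hp⟩
  haveI : Fact (1 < p) := ⟨hp.one_lt⟩
  have h0A : (0 : Fin n → ZMod p) ∈ A := hA.1 (Or.inl rfl)
  have heA : ∀ i : Fin n, Pi.single i (1 : ZMod p) ∈ A := fun i => hA.1 (Or.inr ⟨i, rfl⟩)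
  have hcomp : ∀ j : Fin n, comp (Pi.single j (1 : ZMod p)) A = A := by
    intro j
    apply hA.2
    · intro h
      have := congrFun h j
      simp at this
    · rintro x (rfl | ⟨i, rfl⟩)
      · -- x = 0
        apply mem_comp_of
        have : (0 : Fin n → ZMod p) ∈ A ∩ line (Pi.single j 1) 0 := ⟨h0A, line_self 0⟩
        have hpos : 0 < (A ∩ line (Pi.single j 1) (0 : Fin n → ZMod p)).ncard :=
          (Set.ncard_pos (Set.toFinite _)).mpr ⟨0, this⟩
        simpa using hpos
      · rcases eq_or_ne i j with rfl | hij
        · apply mem_comp_of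
          have h1 : Pi.single i (1 : ZMod p) ∈ A ∩ line (Pi.single i 1) (Pi.single i 1) :=
            ⟨heA i, line_self _⟩
          have h2 : (0 : Fin n → ZMod p) ∈ A ∩ line (Pi.single i 1) (Pi.single i 1) :=
            ⟨h0A, mem_line_single.mpr (fun k hk => by simp [Pi.single_apply, hk])⟩
          have hne : (0 : Fin n → ZMod p) ≠ Pi.single i (1 : ZMod p) := by
            intro h
            have := congrFun h i
            simp at this
          have : 1 < (A ∩ line (Pi.single i 1) (Pi.single i 1)).ncard :=
            Set.one_lt_ncard_iff (Set.toFinite _) |>.mpr ⟨0, Pi.single i 1, h2, h1, hne⟩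
          simpa [ZMod.val_one] using this
        · apply mem_comp_of
          have : Pi.single i (1 : ZMod p) ∈ A ∩ line (Pi.single j 1) (Pi.single i 1) :=
            ⟨heA i, line_self _⟩
          have hpos : 0 < (A ∩ line (Pi.single j 1) (Pi.single i (1 : ZMod p))).ncard :=
            (Set.ncard_pos (Set.toFinite _)).mpr ⟨_, this⟩
          simpa [Pi.single_apply, hij] using hpos
  have key : ∀ s : Finset (Fin n), (fun i => if i ∈ s then b i else a i) ∈ A := by
    intro s
    induction s using Finset.induction with
    | empty => simpa using ha
    | @insert j s hj ih =>
        have heq : (fun i => if i ∈ insert j s then b i else a i)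
            = Function.update (fun i => if i ∈ s then b i else a i) j (b j) := by
          funext i
          rcases eq_or_ne i j with rfl | hi
          · simp [hj]
          · simp [Function.update_apply, hi, Finset.mem_insert]
        rw [heq]
        exact update_mem (hcomp j) ih (by simpa [hj] using hba j)
  simpa using key Finset.univ
end

section
/- Let p be a prime, n ≥ 1, and let A ⊆ (ZMod p)^n be 𝓔-compressed. Let h be the maximal index such that H = span{e₁, …, e_h} ⊆ A, assume m := n − h ≥ 1, and let q ∈ {1, …, p−1} be maximal such that A ∩ (q·e_{h+1} + H) is nonempty. Then q·p^h ≤ |A| ≤ (m + q)·p^h; equivalently, since the affine span of A is all of (ZMod p)^n, q/p^m ≤ |A|/|⟨A⟩| ≤ (m+q)/p^m. -/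
open Pointwise

/-- The affine span of `A`: the smallest coset of a subgroup containing `A`,
realized as the intersection of all such cosets. -/
def affSpan {G : Type*} [AddCommGroup G] (A : Set G) : Set G :=
  ⋂₀ {C : Set G | A ⊆ C ∧ ∃ (H : AddSubgroup G) (g : G), C = g +ᵥ (H : Set G)}

/-- The subgroup spanned by the first `h` standard basis vectors `e_1, ..., e_h`. -/
def spanE (p n h : ℕ) : AddSubgroup (Fin n → ZMod p) :=
  AddSubgroup.closure {x | ∃ j : Fin n, (j : ℕ) < h ∧ x = Pi.single j 1}

section Aux
variable {p n : ℕ}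

lemma line_eq_of_mem {v u x : Fin n → ZMod p} (hx : x ∈ line v u) :
    line v x = line v u := by
  obtain ⟨k, rfl⟩ := hx
  ext z
  constructor
  · rintro ⟨k', rfl⟩
    exact ⟨k + k', by rw [add_smul]; abel⟩
  · rintro ⟨k', rfl⟩
    exact ⟨k' - k, by rw [sub_smul]; abel⟩

lemma self_mem_line (v x : Fin n → ZMod p) : x ∈ line v x :=
  ⟨0, by simp⟩

lemma ncard_val_lt_s11 (hp : p.Prime) (r : ℕ) (hr : r ≤ p) :
    {s : ZMod p | s.val < r}.ncard = r := by
  haveI : NeZero p := ⟨hp.ne_zero⟩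
  have hset : {s : ZMod p | s.val < r} =
      ↑((Finset.range r).image (Nat.cast : ℕ → ZMod p)) := by
    ext s
    simp only [Set.mem_setOf_eq, Finset.coe_image, Set.mem_image, Finset.mem_coe,
      Finset.mem_range]
    constructor
    · intro hs
      exact ⟨s.val, hs, ZMod.natCast_rightInverse s⟩
    · rintro ⟨m, hm, rfl⟩
      rwa [ZMod.val_cast_of_lt (lt_of_lt_of_le hm hr)]
  rw [hset, Set.ncard_coe_finset, Finset.card_image_of_injOn, Finset.card_range]
  intro a ha b hb hab
  simp only [Finset.mem_coe, Finset.mem_range] at ha hb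
  have := congrArg ZMod.val hab
  rwa [ZMod.val_cast_of_lt (lt_of_lt_of_le ha hr),
    ZMod.val_cast_of_lt (lt_of_lt_of_le hb hr)] at this

/-- key counting: on a line in direction `v = c•e_t + d` (supp d < t), the number of
points lex-below `x` equals `(x t).val`. -/
lemma count_below (hp : p.Prime) (t : Fin n) (c : ZMod p) (hc : c ≠ 0)
    (d : Fin n → ZMod p) (hd : ∀ j : Fin n, t ≤ j → d j = 0)
    (v : Fin n → ZMod p) (hveq : v = c • (Pi.single t 1 : Fin n → ZMod p) + d)
    {x u : Fin n → ZMod p} (hx : x ∈ line v u) :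
    {z | z ∈ line v u ∧ lexLt z x}.ncard = (x t).val := by
  haveI : NeZero p := ⟨hp.ne_zero⟩
  haveI : Fact p.Prime := ⟨hp⟩
  have hvt : v t = c := by
    simp [hveq, hd t le_rfl]
  have hvj : ∀ j : Fin n, t < j → v j = 0 := by
    intro j hj
    simp [hveq, hd j hj.le, Pi.single_apply, hj.ne']
  rw [← line_eq_of_mem hx]
  -- characterize lexLt on the line
  have hchar : ∀ k : ZMod p, lexLt (x + k • v) x ↔ ((x + k • v) t).val < (x t).val := by
    intro k
    constructor
    · rintro ⟨i, hlt, hagree⟩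
      rcases lt_trichotomy i t with hit | rfl | hit
      · exfalso
        have ht : (x + k • v) t = x t := hagree t hit
        simp only [Pi.add_apply, Pi.smul_apply, smul_eq_mul] at ht
        have h0 : k * v t = 0 := add_eq_left.mp ht
        have hk : k = 0 := by
          rcases mul_eq_zero.mp h0 with hk | hv0
          · exact hk
          · exact absurd (hvt ▸ hv0) hc
        rw [hk] at hlt
        simp at hlt
      · simpa using hlt
      · exfalso
        have : (x + k • v) i = x i := by
          simp [hvj i hit]
        rw [this] at hlt
        exact lt_irrefl _ hlt
    · intro hlt
      refine ⟨t, hlt, fun j hj => by simp [hvj j hj]⟩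
  -- the set below x as an image
  have himg : {z | z ∈ line v x ∧ lexLt z x} =
      (fun s : ZMod p => x + ((s - x t) * c⁻¹) • v) '' {s : ZMod p | s.val < (x t).val} := by
    ext z
    constructor
    · rintro ⟨⟨k, rfl⟩, hlex⟩
      refine ⟨(x + k • v) t, (hchar k).mp hlex, ?_⟩
      simp only [Pi.add_apply, Pi.smul_apply, smul_eq_mul, hvt]
      rw [add_sub_cancel_left, mul_assoc, mul_inv_cancel₀ hc, mul_one]
    · rintro ⟨s, hs, rfl⟩
      have hcoord : (x + ((s - x t) * c⁻¹) • v) t = s := by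
        simp only [Pi.add_apply, Pi.smul_apply, smul_eq_mul, hvt]
        rw [mul_assoc, inv_mul_cancel₀ hc, mul_one, add_sub_cancel]
      refine ⟨⟨_, rfl⟩, (hchar _).mpr ?_⟩
      rw [hcoord]; exact hs
  rw [himg, Set.ncard_image_of_injective _ ?_, ncard_val_lt_s11 hp _ (ZMod.val_lt _).le]
  intro s1 s2 h12
  have e1 : (x + ((s1 - x t) * c⁻¹) • v) t = s1 := by
    simp only [Pi.add_apply, Pi.smul_apply, smul_eq_mul, hvt]
    rw [mul_assoc, inv_mul_cancel₀ hc, mul_one, add_sub_cancel]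
  have e2 : (x + ((s2 - x t) * c⁻¹) • v) t = s2 := by
    simp only [Pi.add_apply, Pi.smul_apply, smul_eq_mul, hvt]
    rw [mul_assoc, inv_mul_cancel₀ hc, mul_one, add_sub_cancel]
  have h12' : (x + ((s1 - x t) * c⁻¹) • v) = (x + ((s2 - x t) * c⁻¹) • v) := h12
  rw [← e1, ← e2, h12']
end Aux

section Push
variable {p n : ℕ}

lemma zero_mem_stdE : (0 : Fin n → ZMod p) ∈ stdE n p := Or.inl rfl

lemma single_mem_stdE (t : Fin n) : (Pi.single t 1 : Fin n → ZMod p) ∈ stdE n p :=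
  Or.inr ⟨t, rfl⟩

/-- Master lemma: along allowed directions `v = c•e_t + d` with `supp d < t` and
`-(c⁻¹ • d) ∈ A`, membership in `A` is downward closed w.r.t. the `t`-th coordinate. -/
lemma push (hp : p.Prime) {A : Set (Fin n → ZMod p)} (hA : ECompressed A)
    (t : Fin n) (c : ZMod p) (hc : c ≠ 0)
    (d : Fin n → ZMod p) (hd : ∀ j : Fin n, t ≤ j → d j = 0)
    (hdA : -(c⁻¹ • d) ∈ A)
    {y x : Fin n → ZMod p} (hy : y ∈ A)
    (hxeq : x = y + c • (Pi.single t 1 : Fin n → ZMod p) + d)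
    (hval : (x t).val ≤ (y t).val) : x ∈ A := by
  haveI : NeZero p := ⟨hp.ne_zero⟩
  haveI : Fact p.Prime := ⟨hp⟩
  haveI : Fact (1 < p) := ⟨hp.one_lt⟩
  set v : Fin n → ZMod p := c • (Pi.single t 1 : Fin n → ZMod p) + d with hveq
  have hvt : v t = c := by simp [hveq, hd t le_rfl]
  have hv0 : v ≠ 0 := by
    intro h0
    apply hc
    rw [← hvt, h0, Pi.zero_apply]
  have hxy : x = y + (1 : ZMod p) • v := by rw [hxeq, one_smul, hveq]; abel
  -- Step 1 : stdE ⊆ comp v A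
  have hE : stdE n p ⊆ comp v A := by
    intro z hz
    have hzA : z ∈ A := hA.1 hz
    have hzline : z ∈ line v z := self_mem_line v z
    have hcount : {w | w ∈ line v z ∧ lexLt w z}.ncard = (z t).val :=
      count_below hp t c hc d hd v hveq hzline
    rcases hz with hz0 | ⟨i, hi⟩
    · -- z = 0
      have h1 : 0 < (A ∩ line v z).ncard := by
        rw [Set.ncard_pos (Set.toFinite _)]
        exact ⟨z, hzA, hzline⟩
      refine Set.mem_iUnion.mpr ⟨z, hzline, ?_⟩
      rw [hcount]
      have hz0' : z = 0 := hz0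
      have hzt : z t = 0 := by rw [hz0']; simp
      rw [hzt, ZMod.val_zero]
      exact h1
    · -- z = e_i
      by_cases hit : i = t
      · -- z = e_t : two elements on its line
        subst hit
        have hz2 : -(c⁻¹ • d) ∈ line v z := by
          refine ⟨-c⁻¹, ?_⟩
          rw [← hi, hveq]
          rw [smul_add, smul_smul]
          rw [neg_mul, inv_mul_cancel₀ hc, neg_smul, one_smul, neg_smul]
          abel
        have hne : -(c⁻¹ • d) ≠ z := by
          intro heq
          have h1 : (-(c⁻¹ • d)) i = z i := congrFun heq i
          rw [← hi] at h1
          simp [hd i le_rfl] at h1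
        have h2 : 1 < (A ∩ line v z).ncard := by
          rw [Set.one_lt_ncard (Set.toFinite _)]
          exact ⟨_, ⟨hdA, hz2⟩, z, ⟨hzA, hzline⟩, hne⟩
        refine Set.mem_iUnion.mpr ⟨z, hzline, ?_⟩
        rw [hcount]
        have hzt : z i = 1 := by rw [← hi]; simp
        rw [hzt, ZMod.val_one]
        exact h2
      · -- z = e_i, i ≠ t : z is minimal on its line
        have h1 : 0 < (A ∩ line v z).ncard := by
          rw [Set.ncard_pos (Set.toFinite _)]
          exact ⟨z, hzA, hzline⟩
        refine Set.mem_iUnion.mpr ⟨z, hzline, ?_⟩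
        rw [hcount]
        have hzt : z t = 0 := by rw [← hi]; simp [Pi.single_apply, hit]
        rw [hzt, ZMod.val_zero]
        exact h1
  -- Step 2 : use compression
  have hcomp : comp v A = A := hA.2 v hv0 hE
  -- y is in the initial segment of its line
  rw [← hcomp] at hy
  obtain ⟨u, hu⟩ := Set.mem_iUnion.mp hy
  obtain ⟨hyL, hycount⟩ := hu
  have hLeq : line v u = line v y := (line_eq_of_mem hyL).symm
  rw [hLeq] at hycount
  rw [count_below hp t c hc d hd v hveq (self_mem_line v y)] at hycount
  have hxL : x ∈ line v y := ⟨1, hxy⟩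
  have hxcount : {w | w ∈ line v y ∧ lexLt w x}.ncard = (x t).val :=
    count_below hp t c hc d hd v hveq hxL
  rw [← hcomp]
  refine Set.mem_iUnion.mpr ⟨y, hxL, ?_⟩
  rw [hxcount]
  exact lt_of_le_of_lt hval hycount
end Push


section Span
variable {p n : ℕ}

lemma single_eq_nsmul (hp : p.Prime) (j : Fin n) (a : ZMod p) :
    (Pi.single j a : Fin n → ZMod p) = a.val • (Pi.single j 1 : Fin n → ZMod p) := by
  haveI : NeZero p := ⟨hp.ne_zero⟩
  funext i
  rcases eq_or_ne i j with rfl | hij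
  · simp only [Pi.single_eq_same, Pi.smul_apply, nsmul_eq_mul, mul_one]
    exact (ZMod.natCast_rightInverse a).symm
  · simp [Pi.single_apply, hij]

lemma spanE_coe (hp : p.Prime) (k : ℕ) :
    (spanE p n k : Set (Fin n → ZMod p)) = {x | ∀ j : Fin n, k ≤ (j : ℕ) → x j = 0} := by
  apply Set.Subset.antisymm
  · let K : AddSubgroup (Fin n → ZMod p) :=
      { carrier := {x | ∀ j : Fin n, k ≤ (j : ℕ) → x j = 0}
        zero_mem' := by intro j hj; simp
        add_mem' := by intro a b ha hb j hj; simp [ha j hj, hb j hj]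
        neg_mem' := by intro a ha j hj; simp [ha j hj] }
    have hle : spanE p n k ≤ K := by
      apply (AddSubgroup.closure_le _).mpr
      rintro x ⟨j, hj, rfl⟩ j' hj'
      have hne : j ≠ j' := by
        rintro rfl
        omega
      simp [Pi.single_apply, hne.symm]
    exact fun x hx => hle hx
  · intro x hx
    simp only [Set.mem_setOf_eq] at hx
    rw [SetLike.mem_coe]
    have hdecomp : x = ∑ j : Fin n, Pi.single j (x j) := (Finset.univ_sum_single x).symm
    rw [hdecomp]
    apply AddSubgroup.sum_mem
    intro j _
    rcases lt_or_ge (j : ℕ) k with hj | hj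
    · rw [single_eq_nsmul hp]
      exact AddSubgroup.nsmul_mem _
        (AddSubgroup.subset_closure
          (show _ ∈ {x : Fin n → ZMod p | ∃ j : Fin n, (j : ℕ) < k ∧ x = Pi.single j 1} from ⟨j, hj, rfl⟩)) _
    · rw [hx j hj, Pi.single_zero]
      exact AddSubgroup.zero_mem _
end Span

section Down
variable {p n : ℕ}

lemma setCoord (hp : p.Prime) {A : Set (Fin n → ZMod p)} (hA : ECompressed A)
    {y : Fin n → ZMod p} (hy : y ∈ A) (t : Fin n) (s : ZMod p)
    (hs : s.val ≤ (y t).val) : Function.update y t s ∈ A := by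
  haveI : NeZero p := ⟨hp.ne_zero⟩
  rcases eq_or_ne s (y t) with rfl | hne
  · rwa [Function.update_eq_self]
  · refine push hp hA t (s - y t) (sub_ne_zero.mpr hne) 0 (fun j _ => rfl) ?_ hy ?_ ?_
    · simpa using hA.1 zero_mem_stdE
    · funext j
      rcases eq_or_ne j t with rfl | hjt
      · simp
      · simp [Function.update_of_ne hjt, Pi.single_apply, hjt]
    · rwa [Function.update_self]

lemma downset (hp : p.Prime) {A : Set (Fin n → ZMod p)} (hA : ECompressed A)
    {y : Fin n → ZMod p} (hy : y ∈ A) (x : Fin n → ZMod p)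
    (hx : ∀ j : Fin n, x j = y j ∨ x j = 0) : x ∈ A := by
  haveI : NeZero p := ⟨hp.ne_zero⟩
  classical
  obtain ⟨N, hN⟩ : ∃ N, (Finset.univ.filter (fun j : Fin n => x j ≠ y j)).card ≤ N :=
    ⟨_, le_rfl⟩
  induction N generalizing y with
  | zero =>
    have : x = y := by
      funext j
      by_contra hj
      have : j ∈ Finset.univ.filter (fun j : Fin n => x j ≠ y j) := by
        simp [hj]
      have := Finset.card_pos.mpr ⟨j, this⟩
      omega
    rwa [this]
  | succ N ih =>
    rcases Finset.eq_empty_or_nonempty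
        (Finset.univ.filter (fun j : Fin n => x j ≠ y j)) with hemp | ⟨j₀, hj₀⟩
    · have : x = y := by
        funext j
        by_contra hj
        have : j ∈ Finset.univ.filter (fun j : Fin n => x j ≠ y j) := by simp [hj]
        rw [hemp] at this
        exact absurd this (Finset.notMem_empty _)
      rwa [this]
    · simp only [Finset.mem_filter, Finset.mem_univ, true_and] at hj₀
      have hx0 : x j₀ = 0 := (hx j₀).resolve_left hj₀
      have hy' : Function.update y j₀ 0 ∈ A :=
        setCoord hp hA hy j₀ 0 (by simp [ZMod.val_zero])
      apply ih hy'
      · intro j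
        rcases eq_or_ne j j₀ with rfl | hjj
        · rw [Function.update_self]
          exact Or.inr hx0
        · rw [Function.update_of_ne hjj]
          exact hx j
      · have hsub : Finset.univ.filter (fun j : Fin n => x j ≠ Function.update y j₀ 0 j) ⊆
            (Finset.univ.filter (fun j : Fin n => x j ≠ y j)).erase j₀ := by
          intro j hj
          simp only [Finset.mem_filter, Finset.mem_univ, true_and] at hj
          rcases eq_or_ne j j₀ with rfl | hjj
          · rw [Function.update_self] at hj
            exact absurd hx0 hj
          · rw [Function.update_of_ne hjj] at hj
            exact Finset.mem_erase.mpr ⟨hjj, by simp [hj]⟩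
        have := Finset.card_le_card hsub
        have hcard := Finset.card_erase_of_mem
          (show j₀ ∈ Finset.univ.filter (fun j : Fin n => x j ≠ y j) by simp [hj₀])
        omega
end Down

section Main
variable {p n : ℕ}

/-- All of `{x : x_j = 0 for j > h, val (x h) < q}` lies in `A`. -/
lemma lowFull (hp : p.Prime) {A : Set (Fin n → ZMod p)} (hA : ECompressed A)
    (h : ℕ) (hhn : h < n)
    (hhA : (spanE p n h : Set (Fin n → ZMod p)) ⊆ A)
    (q : ℕ) (hq1 : 1 ≤ q) (hq2 : q ≤ p - 1)
    (hqne : (A ∩ (q • (Pi.single (⟨h, hhn⟩ : Fin n) 1 : Fin n → ZMod p) +ᵥ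
      (spanE p n h : Set (Fin n → ZMod p)))).Nonempty)
    (x : Fin n → ZMod p) (hxhigh : ∀ j : Fin n, h < (j : ℕ) → x j = 0)
    (hxval : (x ⟨h, hhn⟩).val < q) : x ∈ A := by
  haveI : NeZero p := ⟨hp.ne_zero⟩
  have hp2 : 2 ≤ p := hp.two_le
  set th : Fin n := ⟨h, hhn⟩ with hth
  have hHmem : ∀ z : Fin n → ZMod p, (∀ j : Fin n, h ≤ (j : ℕ) → z j = 0) → z ∈ A := by
    intro z hz
    apply hhA
    rw [spanE_coe hp]
    exact hz
  obtain ⟨a, haA, hav⟩ := hqne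
  obtain ⟨z, hz, hza⟩ := hav
  rw [spanE_coe hp] at hz
  simp only [Set.mem_setOf_eq] at hz
  have hqp : q < p := by omega
  have hath : a th = (q : ZMod p) := by
    rw [← hza]
    show q • (Pi.single th 1 : Fin n → ZMod p) th + z th = _
    rw [hz th (le_refl h)]
    simp [nsmul_eq_mul]
  have hathval : (a th).val = q := by rw [hath, ZMod.val_cast_of_lt hqp]
  have hahigh : ∀ j : Fin n, h < (j : ℕ) → a j = 0 := by
    intro j hj
    rw [← hza]
    show q • (Pi.single th 1 : Fin n → ZMod p) j + z j = 0
    have hjth : j ≠ th := by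
      intro hjj
      rw [hjj] at hj
      simp [hth] at hj
    rw [hz j hj.le]
    simp [Pi.single_eq_of_ne hjth]
  have hne : x th ≠ a th := by
    intro heq
    rw [heq, hathval] at hxval
    omega
  set c : ZMod p := x th - a th with hc
  set d : Fin n → ZMod p := x - a - c • (Pi.single th 1 : Fin n → ZMod p) with hdd
  have hd : ∀ j : Fin n, th ≤ j → d j = 0 := by
    intro j hj
    rcases eq_or_lt_of_le hj with hjth | hjth
    · rw [hdd]
      simp only [Pi.sub_apply, Pi.smul_apply, smul_eq_mul]
      rw [← hjth]
      simp [hc]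
    · have hjh : h < (j : ℕ) := hjth
      rw [hdd]
      simp only [Pi.sub_apply, Pi.smul_apply, smul_eq_mul]
      have hjth' : j ≠ th := by
        intro hjj
        rw [hjj] at hjh
        simp [hth] at hjh
      rw [hxhigh j hjh, hahigh j hjh, Pi.single_eq_of_ne hjth']
      ring
  refine push hp hA th c (sub_ne_zero.mpr hne) d hd ?_ haA (by rw [hdd]; abel) ?_
  · apply hHmem
    intro j hj
    have : d j = 0 := hd j (by exact hj)
    simp [this]
  · rw [hathval]
    exact hxval.le
end Main
section Main2
variable {p n : ℕ}

lemma val_sub_one (hp : p.Prime) {s : ZMod p} (hs : s ≠ 0) : (s - 1).val = s.val - 1 := by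
  haveI : NeZero p := ⟨hp.ne_zero⟩
  have h1 : 1 ≤ s.val := by
    rcases Nat.eq_zero_or_pos s.val with h0 | h0
    · exact absurd ((ZMod.val_eq_zero s).mp h0) hs
    · exact h0
  have hs' : ((s.val : ℕ) : ZMod p) = s := ZMod.natCast_rightInverse s
  have : s - 1 = ((s.val - 1 : ℕ) : ZMod p) := by
    rw [Nat.cast_sub h1, hs', Nat.cast_one]
  rw [this, ZMod.val_cast_of_lt (by have := ZMod.val_lt s; omega)]

lemma keyContra (hp : p.Prime) {A : Set (Fin n → ZMod p)} (hA : ECompressed A)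
    (h : ℕ) (hhn : h < n)
    (hhA : (spanE p n h : Set (Fin n → ZMod p)) ⊆ A)
    (hhmax : ∀ k : ℕ, (spanE p n k : Set (Fin n → ZMod p)) ⊆ A → k ≤ h)
    (q : ℕ) (hq1 : 1 ≤ q) (hq2 : q ≤ p - 1)
    (hqne : (A ∩ (q • (Pi.single (⟨h, hhn⟩ : Fin n) 1 : Fin n → ZMod p) +ᵥ
      (spanE p n h : Set (Fin n → ZMod p)))).Nonempty)
    (hqmax : ∀ q' : ℕ, q' ≤ p - 1 →
      (A ∩ (q' • (Pi.single (⟨h, hhn⟩ : Fin n) 1 : Fin n → ZMod p) +ᵥ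
        (spanE p n h : Set (Fin n → ZMod p)))).Nonempty → q' ≤ q)
    (b : Fin n → ZMod p) (hbA : b ∈ A) (i : Fin n) (hi : h < (i : ℕ))
    (hbi : b i = 1) (hbth : b ⟨h, hhn⟩ = 1)
    (hbz : ∀ j : Fin n, h ≤ (j : ℕ) → j ≠ ⟨h, hhn⟩ → j ≠ i → b j = 0) : False := by
  haveI : NeZero p := ⟨hp.ne_zero⟩
  haveI : Fact p.Prime := ⟨hp⟩
  have hp2 : 2 ≤ p := hp.two_le
  set th : Fin n := ⟨h, hhn⟩ with hth
  have hthi : th ≠ i := by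
    intro he
    have : (th : ℕ) = (i : ℕ) := by rw [he]
    simp [hth] at this
    omega
  have hHmem : ∀ z : Fin n → ZMod p, (∀ j : Fin n, h ≤ (j : ℕ) → z j = 0) → z ∈ A := by
    intro z hz
    apply hhA
    rw [spanE_coe hp]
    exact hz
  -- every point with zero coordinates above h and level ≤ q lies in A
  have stepA : ∀ x : Fin n → ZMod p, (∀ j : Fin n, h < (j : ℕ) → x j = 0) →
      (x th).val ≤ q → x ∈ A := by
    intro x hxh hxv
    rcases eq_or_ne (x th) 0 with hx0 | hx0
    · apply hHmem
      intro j hj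
      rcases eq_or_lt_of_le hj with he | hlt
      · have hjth : j = th := by
          apply Fin.ext
          simp only [hth]
          omega
        rw [hjth]
        exact hx0
      · exact hxh j hlt
    · set d : Fin n → ZMod p := x - b + Pi.single i 1 with hdd
      have hd : ∀ j : Fin n, i ≤ j → d j = 0 := by
        intro j hj
        rcases eq_or_lt_of_le hj with he | hlt
        · have hji : j = i := Fin.ext (by omega)
          rw [hdd, hji]
          simp [hxh i hi, hbi]
        · have hjh : h < (j : ℕ) := by omega
          have hjth : j ≠ th := by
            intro hjj
            rw [hjj] at hjh
            simp [hth] at hjh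
          have hji : j ≠ i := by
            intro hjj
            rw [hjj] at hlt
            exact lt_irrefl _ hlt
          rw [hdd]
          simp [hxh j hjh, hbz j hjh.le hjth hji, Pi.single_eq_of_ne hji]
      have hdA : d ∈ A := by
        apply lowFull hp hA h hhn hhA q hq1 hq2 hqne
        · intro j hj
          rcases eq_or_ne j i with rfl | hji
          · rw [hdd]; simp [hxh j hj, hbi]
          · have hjth : j ≠ th := by
              intro hjj
              rw [hjj] at hj
              simp [hth] at hj
            rw [hdd]
            simp [hxh j hj, hbz j hj.le hjth hji, Pi.single_eq_of_ne hji]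
        · have hdth : d th = x th - 1 := by
            rw [hdd]
            simp [hbth, Pi.single_eq_of_ne hthi]
          rw [hdth, val_sub_one hp hx0]
          have h1 : 1 ≤ (x th).val := by
            rcases Nat.eq_zero_or_pos (x th).val with h0 | h0
            · exact absurd ((ZMod.val_eq_zero _).mp h0) hx0
            · exact h0
          omega
      refine push hp hA i (-1) (neg_ne_zero.mpr one_ne_zero) d hd ?_ hbA ?_ ?_
      · rw [inv_neg_one, neg_smul, one_smul, neg_neg]
        exact hdA
      · rw [hdd, neg_one_smul]
        abel
      · simp [hxh i hi]
  -- conclude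
  rcases le_or_gt (q + 1) (p - 1) with hq | hq
  · -- produce a point at level q+1, contradicting maximality of q
    set x₁ : Fin n → ZMod p := fun j => if j = th then ((q + 1 : ℕ) : ZMod p) else 0 with hx₁
    set d : Fin n → ZMod p := x₁ - b + Pi.single i 1 with hdd
    have hd : ∀ j : Fin n, i ≤ j → d j = 0 := by
      intro j hj
      rcases eq_or_lt_of_le hj with he | hlt
      · have hji : j = i := Fin.ext (by omega)
        rw [hdd, hji]
        simp [hx₁, hthi.symm, hbi]
      · have hjh : h < (j : ℕ) := by omega
        have hjth : j ≠ th := by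
          intro hjj
          rw [hjj] at hjh
          simp [hth] at hjh
        have hji : j ≠ i := by
          intro hjj
          rw [hjj] at hlt
          exact lt_irrefl _ hlt
        rw [hdd]
        simp [hx₁, hjth, hbz j hjh.le hjth hji, Pi.single_eq_of_ne hji]
    have hdA : d ∈ A := by
      apply stepA
      · intro j hj
        rcases eq_or_ne j i with rfl | hji
        · rw [hdd]
          simp [hx₁, hthi.symm, hbi]
        · have hjth : j ≠ th := by
            intro hjj
            rw [hjj] at hj
            simp [hth] at hj
          rw [hdd]
          simp [hx₁, hjth, hbz j hj.le hjth hji, Pi.single_eq_of_ne hji]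
      · have hdth : d th = ((q : ℕ) : ZMod p) := by
          rw [hdd]
          simp [hx₁, hbth, Pi.single_eq_of_ne hthi]
        rw [hdth, ZMod.val_cast_of_lt (by omega)]
    have hx₁A : x₁ ∈ A := by
      refine push hp hA i (-1) (neg_ne_zero.mpr one_ne_zero) d hd ?_ hbA ?_ ?_
      · rw [inv_neg_one, neg_smul, one_smul, neg_neg]
        exact hdA
      · rw [hdd, neg_one_smul]
        abel
      · simp [hx₁, hthi.symm]
    have : q + 1 ≤ q := by
      apply hqmax (q + 1) hq
      refine ⟨x₁, hx₁A, ?_⟩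
      refine ⟨0, ?_, ?_⟩
      · rw [SetLike.mem_coe]
        exact AddSubgroup.zero_mem _
      · show (q + 1) • (Pi.single th 1 : Fin n → ZMod p) + 0 = x₁
        funext j
        rcases eq_or_ne j th with rfl | hjth
        · simp [hx₁, nsmul_eq_mul]
        · simp [hx₁, hjth, Pi.single_eq_of_ne hjth]
    omega
  · -- q = p - 1 : all of spanE (h+1) is inside A, contradicting maximality of h
    have hq' : q = p - 1 := by omega
    have hsub : (spanE p n (h + 1) : Set (Fin n → ZMod p)) ⊆ A := by
      rw [spanE_coe hp]
      intro x hx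
      simp only [Set.mem_setOf_eq] at hx
      apply stepA
      · intro j hj
        exact hx j (by omega)
      · have := ZMod.val_lt (x th)
        omega
    have := hhmax (h + 1) hsub
    omega
end Main2
section Main3
variable {p n : ℕ}

lemma val_one_le (hp : p.Prime) {s : ZMod p} (h0 : s ≠ 0) : 1 ≤ s.val := by
  haveI : NeZero p := ⟨hp.ne_zero⟩
  have : s.val ≠ 0 := fun hv => h0 ((ZMod.val_eq_zero s).mp hv)
  omega

lemma val_ge_two (hp : p.Prime) {s : ZMod p} (h0 : s ≠ 0) (h1 : s ≠ 1) : 2 ≤ s.val := by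
  haveI : NeZero p := ⟨hp.ne_zero⟩
  have hv1 : s.val ≠ 1 := by
    intro hv
    apply h1
    have hs' : ((s.val : ℕ) : ZMod p) = s := ZMod.natCast_rightInverse s
    rw [← hs', hv, Nat.cast_one]
  have := val_one_le hp h0
  omega

lemma classify (hp : p.Prime) {A : Set (Fin n → ZMod p)} (hA : ECompressed A)
    (h : ℕ) (hhn : h < n)
    (hhA : (spanE p n h : Set (Fin n → ZMod p)) ⊆ A)
    (hhmax : ∀ k : ℕ, (spanE p n k : Set (Fin n → ZMod p)) ⊆ A → k ≤ h)
    (q : ℕ) (hq1 : 1 ≤ q) (hq2 : q ≤ p - 1)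
    (hqne : (A ∩ (q • (Pi.single (⟨h, hhn⟩ : Fin n) 1 : Fin n → ZMod p) +ᵥ
      (spanE p n h : Set (Fin n → ZMod p)))).Nonempty)
    (hqmax : ∀ q' : ℕ, q' ≤ p - 1 →
      (A ∩ (q' • (Pi.single (⟨h, hhn⟩ : Fin n) 1 : Fin n → ZMod p) +ᵥ
        (spanE p n h : Set (Fin n → ZMod p)))).Nonempty → q' ≤ q)
    (a : Fin n → ZMod p) (haA : a ∈ A) :
    ((∀ j : Fin n, h < (j : ℕ) → a j = 0) ∧ (a ⟨h, hhn⟩).val ≤ q) ∨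
    (∃ i : Fin n, h < (i : ℕ) ∧ a i = 1 ∧
      ∀ j : Fin n, h ≤ (j : ℕ) → j ≠ i → a j = 0) := by
  classical
  haveI : NeZero p := ⟨hp.ne_zero⟩
  haveI : Fact p.Prime := ⟨hp⟩
  have hp2 : 2 ≤ p := hp.two_le
  set th : Fin n := ⟨h, hhn⟩ with hth
  by_cases hhi : ∀ j : Fin n, h < (j : ℕ) → a j = 0
  · left
    refine ⟨hhi, ?_⟩
    by_contra hval
    push_neg at hval
    have hq' : (a th).val ≤ p - 1 := by have := ZMod.val_lt (a th); omega
    have : (a th).val ≤ q := by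
      apply hqmax _ hq'
      refine ⟨a, haA, ?_⟩
      refine ⟨fun j : Fin n => if (j : ℕ) < h then a j else 0, ?_, ?_⟩
      · rw [spanE_coe hp]
        simp only [Set.mem_setOf_eq]
        intro j hj
        rw [if_neg (by omega)]
      · show (a th).val • (Pi.single th 1 : Fin n → ZMod p) +
          (fun j : Fin n => if (j : ℕ) < h then a j else 0) = a
        funext j
        rcases lt_trichotomy (j : ℕ) h with hjlt | hje | hjgt
        · have hjth : j ≠ th := by
            intro hjj; rw [hjj] at hjlt; simp only [hth] at hjlt; omega
          simp [Pi.single_eq_of_ne hjth, if_pos hjlt]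
        · have hjth : j = th := Fin.ext (by simp only [hth]; omega)
          rw [hjth]
          have hc : ¬ ((th : ℕ) < h) := by simp only [hth]; omega
          simp only [Pi.add_apply, Pi.smul_apply, Pi.single_eq_same, hc, if_false, add_zero]
          rw [nsmul_eq_mul, mul_one]
          exact ZMod.natCast_rightInverse (a th)
        · have hjth : j ≠ th := by
            intro hjj; rw [hjj] at hjgt; simp only [hth] at hjgt; omega
          simp [Pi.single_eq_of_ne hjth, if_neg (by omega : ¬ (j : ℕ) < h), hhi j hjgt]
    omega
  · push_neg at hhi
    obtain ⟨j₁, hj₁, haj₁⟩ := hhi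
    set F := Finset.univ.filter (fun j : Fin n => h < (j : ℕ) ∧ a j ≠ 0) with hF
    have hFne : F.Nonempty := ⟨j₁, by simp [hF, hj₁, haj₁]⟩
    set i := F.max' hFne with hi
    have hiF : i ∈ F := F.max'_mem hFne
    rw [hF, Finset.mem_filter] at hiF
    obtain ⟨-, hih, hai⟩ := hiF
    have htop : ∀ j : Fin n, (i : ℕ) < (j : ℕ) → a j = 0 := by
      intro j hj
      by_contra hne
      have hjF : j ∈ F := by
        rw [hF, Finset.mem_filter]
        exact ⟨Finset.mem_univ _, by omega, hne⟩
      have hle : (j : ℕ) ≤ (i : ℕ) := F.le_max' j hjF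
      omega
    have hthi : th ≠ i := by
      intro he
      have : (th : ℕ) = (i : ℕ) := by rw [he]
      simp only [hth] at this
      omega
    by_cases hmid : ∃ j : Fin n, h ≤ (j : ℕ) ∧ (j : ℕ) < (i : ℕ) ∧ a j ≠ 0
    · exfalso
      obtain ⟨j, hjh, hji, haj⟩ := hmid
      have hjnei : j ≠ i := by intro he; rw [he] at hji; omega
      set x₂ : Fin n → ZMod p :=
        fun j' => if (j' : ℕ) < h then a j' else if j' = j ∨ j' = i then a j' else 0 with hx₂
      have hx₂A : x₂ ∈ A := by
        apply downset hp hA haA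
        intro j'
        simp only [hx₂]
        split
        · exact Or.inl rfl
        · split
          · exact Or.inl rfl
          · exact Or.inr rfl
      have hx₂i : x₂ i = a i := by
        simp [hx₂, (by omega : ¬ ((i : ℕ) < h))]
      have hx₂j : x₂ j = a j := by
        simp [hx₂, (by omega : ¬ ((j : ℕ) < h))]
      have hb₁A : Function.update x₂ i 1 ∈ A := by
        apply setCoord hp hA hx₂A
        rw [hx₂i, ZMod.val_one]
        exact val_one_le hp hai
      set b : Fin n → ZMod p := Function.update (Function.update x₂ i 1) j 1 with hb
      have hbA : b ∈ A := by
        apply setCoord hp hA hb₁A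
        rw [Function.update_of_ne hjnei, hx₂j, ZMod.val_one]
        exact val_one_le hp haj
      have hbi : b i = 1 := by
        rw [hb, Function.update_of_ne (fun he => hjnei he.symm), Function.update_self]
      have hbj : b j = 1 := by rw [hb, Function.update_self]
      have hbz : ∀ j' : Fin n, h ≤ (j' : ℕ) → j' ≠ j → j' ≠ i → b j' = 0 := by
        intro j' h1 h2 h3
        rw [hb, Function.update_of_ne h2, Function.update_of_ne h3]
        simp only [hx₂]
        rw [if_neg (by omega : ¬ ((j' : ℕ) < h)), if_neg (by
          rintro (he | he)
          · exact h2 he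
          · exact h3 he)]
      rcases eq_or_lt_of_le hjh with hjeq | hjgt
      · have hjth : j = th := Fin.ext (by simp only [hth]; omega)
        exact keyContra hp hA h hhn hhA hhmax q hq1 hq2 hqne hqmax b hbA i hih hbi
          (show b th = 1 by rw [← hjth]; exact hbj)
          (fun j' hj' h1 h2 => hbz j' hj' (fun he => h1 (he.trans hjth)) h2)
      · have hjth : j ≠ th := by
          intro he
          have : (j : ℕ) = h := by rw [he]
          omega
        set b' : Fin n → ZMod p :=
          fun j' => if j' = j then 0 else if j' = th then 1 else b j' with hb'
        set d : Fin n → ZMod p := b' - b + Pi.single j 1 with hd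
        have hdsingle : d = Pi.single th 1 := by
          funext j'
          simp only [hd, Pi.add_apply, Pi.sub_apply]
          rcases eq_or_ne j' j with rfl | h1
          · rw [Pi.single_eq_same, Pi.single_eq_of_ne hjth]
            simp only [hb', if_pos rfl, hbj]
            ring
          · rw [Pi.single_eq_of_ne h1]
            simp only [hb', if_neg h1]
            rcases eq_or_ne j' th with rfl | h2
            · rw [if_pos rfl, Pi.single_eq_same]
              have hbj' : b th = 0 := by
                apply hbz th (by simp only [hth]; omega) (fun he => hjth he.symm) hthi
              rw [hbj']
              ring
            · rw [if_neg h2, Pi.single_eq_of_ne h2]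
              ring
        have hb'A : b' ∈ A := by
          refine push hp hA j (-1) (neg_ne_zero.mpr one_ne_zero) d ?_ ?_ hbA ?_ ?_
          · intro j' hj'
            rw [hdsingle]
            refine Pi.single_eq_of_ne ?_ 1
            intro he
            rw [he] at hj'
            have : (j : ℕ) ≤ (th : ℕ) := hj'
            simp only [hth] at this
            omega
          · rw [inv_neg_one, neg_smul, one_smul, neg_neg, hdsingle]
            exact hA.1 (single_mem_stdE th)
          · rw [hd, neg_one_smul]
            abel
          · simp only [hb', if_pos rfl, hbj, ZMod.val_one, ZMod.val_zero]
            omega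
        apply keyContra hp hA h hhn hhA hhmax q hq1 hq2 hqne hqmax b' hb'A i hih
        · simp only [hb']
          rw [if_neg (fun he => hjnei he.symm), if_neg (fun he => hthi he.symm)]
          exact hbi
        · show b' th = 1
          simp only [hb']
          rw [if_neg (fun he => hjth he.symm)]
          simp
        · intro j' h1 h2 h3
          have h2' : j' ≠ th := h2
          simp only [hb']
          rcases eq_or_ne j' j with rfl | h4
          · rw [if_pos rfl]
          · rw [if_neg h4, if_neg h2']
            exact hbz j' h1 h4 h3
    · push_neg at hmid
      by_cases hone : a i = 1
      · right
        refine ⟨i, hih, hone, ?_⟩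
        intro j hjh hji
        rcases lt_trichotomy (j : ℕ) (i : ℕ) with hlt | heq | hgt
        · exact hmid j hjh hlt
        · exact absurd (Fin.ext heq) hji
        · exact htop j hgt
      · exfalso
        have hval2 : 2 ≤ (a i).val := val_ge_two hp hai hone
        have hp3 : 2 < p := by have := ZMod.val_lt (a i); omega
        set a' : Fin n → ZMod p := Function.update a i ((2 : ℕ) : ZMod p) with ha'
        have ha'A : a' ∈ A := by
          apply setCoord hp hA haA
          rw [ZMod.val_cast_of_lt hp3]
          exact hval2
        have hath : a th = 0 := hmid th (by simp only [hth]; omega) (by simp only [hth]; omega)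
        set b₆ : Fin n → ZMod p :=
          fun j' => if j' = i then 1 else if j' = th then 1 else
            if (j' : ℕ) < h then a j' else 0 with hb₆
        set d : Fin n → ZMod p := b₆ - a' + Pi.single i 1 with hd
        have hdsingle : d = Pi.single th 1 := by
          funext j'
          simp only [hd, Pi.add_apply, Pi.sub_apply]
          rcases eq_or_ne j' i with rfl | h1
          · rw [Pi.single_eq_same, Pi.single_eq_of_ne (fun he => hthi he.symm)]
            simp only [hb₆, if_pos rfl, ha', Function.update_self]
            push_cast
            ring
          · rw [Pi.single_eq_of_ne h1]
            simp only [hb₆, if_neg h1, ha', Function.update_of_ne h1]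
            rcases eq_or_ne j' th with rfl | h2
            · rw [if_pos rfl, Pi.single_eq_same, hath]
              ring
            · rw [if_neg h2, Pi.single_eq_of_ne h2]
              rcases lt_or_ge (j' : ℕ) h with h3 | h3
              · rw [if_pos h3]
                ring
              · rw [if_neg (by omega)]
                rcases lt_trichotomy (j' : ℕ) (i : ℕ) with h4 | h4 | h4
                · rw [hmid j' h3 h4]
                  ring
                · exact absurd (Fin.ext h4) h1
                · rw [htop j' h4]
                  ring
        have hb₆A : b₆ ∈ A := by
          refine push hp hA i (-1) (neg_ne_zero.mpr one_ne_zero) d ?_ ?_ ha'A ?_ ?_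
          · intro j' hj'
            rw [hdsingle]
            refine Pi.single_eq_of_ne ?_ 1
            intro he
            rw [he] at hj'
            have : (i : ℕ) ≤ (th : ℕ) := hj'
            simp only [hth] at this
            omega
          · rw [inv_neg_one, neg_smul, one_smul, neg_neg, hdsingle]
            exact hA.1 (single_mem_stdE th)
          · rw [hd, neg_one_smul]
            abel
          · simp only [hb₆, if_pos rfl, ha', Function.update_self, ZMod.val_one,
              ZMod.val_cast_of_lt hp3]
            omega
        apply keyContra hp hA h hhn hhA hhmax q hq1 hq2 hqne hqmax b₆ hb₆A i hih
        · simp [hb₆]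
        · show b₆ th = 1
          simp only [hb₆]
          rw [if_neg (fun he => hthi he)]
          simp
        · intro j' h1 h2 h3
          have h2' : j' ≠ th := h2
          simp only [hb₆]
          rw [if_neg h3, if_neg h2', if_neg (by omega)]
end Main3

theorem statement11 (p n : ℕ) (hp : p.Prime) (hn : 1 ≤ n)
    (A : Set (Fin n → ZMod p)) (hA : ECompressed A)
    (h : ℕ) (hhn : h < n)
    (hhA : (spanE p n h : Set (Fin n → ZMod p)) ⊆ A)
    (hhmax : ∀ k : ℕ, (spanE p n k : Set (Fin n → ZMod p)) ⊆ A → k ≤ h)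
    (m : ℕ) (hm : m = n - h) (hm1 : 1 ≤ m)
    (q : ℕ) (hq1 : 1 ≤ q) (hq2 : q ≤ p - 1)
    (hqne : (A ∩ (q • (Pi.single (⟨h, hhn⟩ : Fin n) 1 : Fin n → ZMod p) +ᵥ
      (spanE p n h : Set (Fin n → ZMod p)))).Nonempty)
    (hqmax : ∀ q' : ℕ, q' ≤ p - 1 →
      (A ∩ (q' • (Pi.single (⟨h, hhn⟩ : Fin n) 1 : Fin n → ZMod p) +ᵥ
        (spanE p n h : Set (Fin n → ZMod p)))).Nonempty → q' ≤ q) :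
    q * p ^ h ≤ A.ncard ∧ A.ncard ≤ (m + q) * p ^ h ∧ affSpan A = Set.univ := by
  classical
  haveI : NeZero p := ⟨hp.ne_zero⟩
  haveI : Fact p.Prime := ⟨hp⟩
  have hp2 : 2 ≤ p := hp.two_le
  have hqlt : q < p := by omega
  have hcardH : Nat.card (Fin h → ZMod p) = p ^ h := by
    rw [Nat.card_eq_fintype_card, Fintype.card_fun, ZMod.card, Fintype.card_fin]
  refine ⟨?_, ?_, ?_⟩
  · -- lower bound
    set f : (Fin h → ZMod p) × Fin q → Fin n → ZMod p := fun z i =>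
      if hi : (i : ℕ) < h then z.1 ⟨(i : ℕ), hi⟩
      else if (i : ℕ) = h then ((z.2 : ℕ) : ZMod p) else 0 with hf
    have hfA : ∀ z, f z ∈ A := by
      intro z
      apply lowFull hp hA h hhn hhA q hq1 hq2 hqne
      · intro j hj
        simp only [hf]
        rw [dif_neg (by omega), if_neg (by omega)]
      · simp only [hf]
        rw [dif_neg (by exact lt_irrefl h), if_true]
        rw [ZMod.val_cast_of_lt (by have := z.2.2; omega)]
        exact z.2.2
    have hinj : Function.Injective
        (fun z : (Fin h → ZMod p) × Fin q => (⟨f z, hfA z⟩ : ↥A)) := by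
      intro z1 z2 hz
      have hz' : f z1 = f z2 := congrArg Subtype.val hz
      have h1 : z1.1 = z2.1 := by
        funext u
        have hcf := congrFun hz' ⟨(u : ℕ), lt_trans u.2 hhn⟩
        simp only [hf] at hcf
        rw [dif_pos (by exact u.2), dif_pos (by exact u.2)] at hcf
        exact hcf
      have h2 : z1.2 = z2.2 := by
        have hcf := congrFun hz' ⟨h, hhn⟩
        simp only [hf] at hcf
        rw [dif_neg (by exact lt_irrefl h), dif_neg (by exact lt_irrefl h),
          if_true, if_true] at hcf
        have := congrArg ZMod.val hcf
        rw [ZMod.val_cast_of_lt (by have := z1.2.2; omega),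
          ZMod.val_cast_of_lt (by have := z2.2.2; omega)] at this
        exact Fin.ext this
      exact Prod.ext h1 h2
    calc q * p ^ h = Nat.card ((Fin h → ZMod p) × Fin q) := by
          rw [Nat.card_prod, hcardH, Nat.card_eq_fintype_card, Fintype.card_fin]
          ring
      _ ≤ Nat.card ↥A := Nat.card_le_card_of_injective _ hinj
      _ = A.ncard := Nat.card_coe_set_eq A
  · -- upper bound
    have hclass := fun (a : Fin n → ZMod p) (ha : a ∈ A) =>
      classify hp hA h hhn hhA hhmax q hq1 hq2 hqne hqmax a ha
    set F : ↥A → (Fin h → ZMod p) × (Fin (q + 1) ⊕ {i : Fin n // h < (i : ℕ)}) :=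
      fun a =>
      (fun u : Fin h => (a : Fin n → ZMod p) ⟨(u : ℕ), lt_trans u.2 hhn⟩,
        if hc : (∀ j : Fin n, h < (j : ℕ) → (a : Fin n → ZMod p) j = 0) ∧
            ((a : Fin n → ZMod p) ⟨h, hhn⟩).val ≤ q
        then Sum.inl ⟨((a : Fin n → ZMod p) ⟨h, hhn⟩).val, Nat.lt_succ_of_le hc.2⟩
        else Sum.inr ⟨((hclass a a.2).resolve_left hc).choose,
          ((hclass a a.2).resolve_left hc).choose_spec.1⟩) with hF
    have hinj : Function.Injective F := by
      intro a b hab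
      have h1 := congrArg Prod.fst hab
      have h2 := congrArg Prod.snd hab
      simp only [hF] at h1 h2
      have hlow : ∀ i : Fin n, (i : ℕ) < h →
          (a : Fin n → ZMod p) i = (b : Fin n → ZMod p) i := by
        intro i hi
        have := congrFun h1 ⟨(i : ℕ), hi⟩
        exact this
      apply Subtype.ext
      funext i
      rcases lt_or_ge (i : ℕ) h with hi | hi
      · exact hlow i hi
      · by_cases hca : (∀ j : Fin n, h < (j : ℕ) → (a : Fin n → ZMod p) j = 0) ∧
            ((a : Fin n → ZMod p) ⟨h, hhn⟩).val ≤ q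
        · by_cases hcb : (∀ j : Fin n, h < (j : ℕ) → (b : Fin n → ZMod p) j = 0) ∧
              ((b : Fin n → ZMod p) ⟨h, hhn⟩).val ≤ q
          · rw [dif_pos hca, dif_pos hcb] at h2
            have hv : ((a : Fin n → ZMod p) ⟨h, hhn⟩).val =
                ((b : Fin n → ZMod p) ⟨h, hhn⟩).val := by
              have := Sum.inl.inj h2
              exact Fin.val_eq_of_eq this
            have hv' : (a : Fin n → ZMod p) ⟨h, hhn⟩ = (b : Fin n → ZMod p) ⟨h, hhn⟩ := by
              have ha' := ZMod.natCast_rightInverse ((a : Fin n → ZMod p) ⟨h, hhn⟩)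
              have hb' := ZMod.natCast_rightInverse ((b : Fin n → ZMod p) ⟨h, hhn⟩)
              rw [← ha', ← hb', hv]
            rcases eq_or_lt_of_le hi with he | hlt
            · have : i = (⟨h, hhn⟩ : Fin n) := Fin.ext (show (i : ℕ) = h by omega)
              rw [this]
              exact hv'
            · rw [hca.1 i hlt, hcb.1 i hlt]
          · rw [dif_pos hca, dif_neg hcb] at h2
            exact absurd h2 (by simp)
        · by_cases hcb : (∀ j : Fin n, h < (j : ℕ) → (b : Fin n → ZMod p) j = 0) ∧
              ((b : Fin n → ZMod p) ⟨h, hhn⟩).val ≤ q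
          · rw [dif_neg hca, dif_pos hcb] at h2
            exact absurd h2 (by simp)
          · rw [dif_neg hca, dif_neg hcb] at h2
            have hieq := Sum.inr.inj h2
            have hia := ((hclass a a.2).resolve_left hca).choose_spec
            have hib := ((hclass b b.2).resolve_left hcb).choose_spec
            have hii : ((hclass a a.2).resolve_left hca).choose =
                ((hclass b b.2).resolve_left hcb).choose := congrArg Subtype.val hieq
            rcases eq_or_ne i ((hclass a a.2).resolve_left hca).choose with he | hne
            · rw [he, hia.2.1, hii, hib.2.1]
            · rw [hia.2.2 i hi hne,
                hib.2.2 i hi (fun he' => hne (he'.trans hii.symm))]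
    have hsub : Nat.card {i : Fin n // h < (i : ℕ)} = n - (h + 1) := by
      have e : {i : Fin n // h < (i : ℕ)} ≃ Fin (n - (h + 1)) :=
        { toFun := fun i => ⟨(i : Fin n).1 - (h + 1), by
            have h1 := i.2
            have h2 := (i : Fin n).2
            omega⟩
          invFun := fun k => ⟨⟨(k : ℕ) + (h + 1), by have := k.2; omega⟩, by
            simp only []
            omega⟩
          left_inv := fun i => by
            apply Subtype.ext
            apply Fin.ext
            have h1 := i.2
            simp only []
            omega
          right_inv := fun k => by
            apply Fin.ext
            simp only []
            omega }
      rw [Nat.card_congr e, Nat.card_eq_fintype_card, Fintype.card_fin]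
    calc A.ncard = Nat.card ↥A := (Nat.card_coe_set_eq A).symm
      _ ≤ Nat.card ((Fin h → ZMod p) × (Fin (q + 1) ⊕ {i : Fin n // h < (i : ℕ)})) :=
          Nat.card_le_card_of_injective F hinj
      _ = (m + q) * p ^ h := by
          rw [Nat.card_prod, hcardH, Nat.card_sum, hsub, Nat.card_eq_fintype_card,
            Fintype.card_fin]
          have : q + 1 + (n - (h + 1)) = m + q := by omega
          rw [this]
          ring
  · -- affine span is everything
    apply Set.Subset.antisymm (Set.subset_univ _)
    intro x _
    show x ∈ ⋂₀ {C : Set (Fin n → ZMod p) | A ⊆ C ∧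
      ∃ (H : AddSubgroup (Fin n → ZMod p)) (g : Fin n → ZMod p), C = g +ᵥ (H : Set _)}
    rw [Set.mem_sInter]
    rintro C ⟨hAC, K, g, rfl⟩
    have h0 : (0 : Fin n → ZMod p) ∈ g +ᵥ (K : Set (Fin n → ZMod p)) :=
      hAC (hA.1 zero_mem_stdE)
    obtain ⟨k0, hk0, hgk0⟩ := h0
    have hgK : g ∈ K := by
      have hg : g = -k0 := by
        have h00 : g + k0 = 0 := hgk0
        exact eq_neg_of_add_eq_zero_left h00
      rw [hg]
      exact K.neg_mem hk0
    have hsingle : ∀ i : Fin n, (Pi.single i 1 : Fin n → ZMod p) ∈ K := by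
      intro i
      have hmem : (Pi.single i 1 : Fin n → ZMod p) ∈ g +ᵥ (K : Set (Fin n → ZMod p)) :=
        hAC (hA.1 (single_mem_stdE i))
      obtain ⟨k1, hk1, hgk1⟩ := hmem
      have : (Pi.single i 1 : Fin n → ZMod p) = g + k1 := by
        rw [← hgk1]; rfl
      rw [this]
      exact K.add_mem hgK hk1
    have hKall : ∀ y : Fin n → ZMod p, y ∈ K := by
      intro y
      have hdecomp : y = ∑ j : Fin n, Pi.single j (y j) := (Finset.univ_sum_single y).symm
      rw [hdecomp]
      apply AddSubgroup.sum_mem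
      intro j _
      rw [single_eq_nsmul hp]
      exact AddSubgroup.nsmul_mem _ (hsingle j) _
    refine ⟨x - g, hKall _, ?_⟩
    show g + (x - g) = x
    abel
end
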